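/- Suppose S ⊆ ℕ is decidable and nonempty, with some fixed s ∈ S. Then totality many-one reduces to total correctness: there is a computable function f : Nat.Partrec.Code → Nat.Partrec.Code such that for every code g, (∀ x, (eval g x).Dom) ↔ ((∀ x, (eval (f g) x).Dom) ∧ (∀ x y, y ∈ eval (f g) x → y ∈ S)). -/

import Mathlib

open Nat.Partrec (Code)
open Nat.Partrec.Code

theorem tot_reduces_to_total_correctness (S : Set ℕ) (hS : ComputablePred (· ∈ S))
    (s : ℕ) (hs : s ∈ S) :
    ∃ f : Nat.Partrec.Code → Nat.Partrec.Code, Computable f ∧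
      ∀ g : Nat.Partrec.Code,
        (∀ x, (g.eval x).Dom) ↔
          ((∀ x, ((f g).eval x).Dom) ∧ (∀ x y, y ∈ (f g).eval x → y ∈ S)) := by
  -- the function (g, x) ↦ (eval g x).map (fun _ => s) as ℕ →. ℕ
  have h : Partrec fun n : ℕ =>
      ((Denumerable.ofNat Code n.unpair.1).eval n.unpair.2).map (fun _ => s) :=
    Partrec.map
      (eval_part.comp ((Computable.ofNat Code).comp (Computable.fst.comp Computable.unpair))
        (Computable.snd.comp Computable.unpair))
      (Computable.const s).to₂
  obtain ⟨c, hc⟩ := exists_code.1 h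
  refine ⟨fun g => c.curry (Encodable.encode g),
    (primrec₂_curry.comp (Primrec.const c) Primrec.encode).to_comp, fun g => ?_⟩
  have key : ∀ x, (c.curry (Encodable.encode g)).eval x = (g.eval x).map (fun _ => s) := by
    intro x
    rw [eval_curry, hc]
    simp [Part.map_map, Function.comp_def]
  constructor
  · intro hg
    constructor
    · intro x
      rw [key]
      obtain ⟨y, hy⟩ := Part.dom_iff_mem.1 (hg x)
      exact Part.dom_iff_mem.2 ⟨s, Part.mem_map _ hy⟩
    · intro x y hy
      rw [key] at hy
      obtain ⟨a, _, rfl⟩ := Part.mem_map_iff _ |>.1 hy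
      exact hs
  · rintro ⟨hdom, -⟩ x
    have := hdom x
    rw [key] at this
    simpa using this
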